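/- Assume k is even and let a, a′ ∈ F both have tr(a) = tr(a′) = 1. Then the graphs G_k(a) and G_k(a′) are isomorphic as simple graphs. -/

import Mathlib

/-- The absolute trace `tr(x) = x + x² + x⁴ + ⋯ + x^{2^{k-1}}` of a finite field
of order `2^k`, taking values in the prime subfield `{0, 1} ⊆ F`. -/
def fieldTr {F : Type*} [Field F] (k : ℕ) (x : F) : F :=
  ∑ i ∈ Finset.range k, x ^ (2 ^ i)

/-- The defining relation of the graph `G_k(a)` on the vertex set `F ∪ {∞}`
(with `∞ = none`): distinct `x, y ∈ F` are related iff
`tr((xy + x + a)/(x + y)) = 0`, and `x ∈ F` is related to `∞` iff `tr(x) = 0`. -/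
def adjRel {F : Type*} [Field F] (k : ℕ) (a : F) : Option F → Option F → Prop
  | some x, some y => fieldTr k ((x * y + x + a) / (x + y)) = 0
  | some x, none   => fieldTr k x = 0
  | none,   some y => fieldTr k y = 0
  | none,   none   => False

/-- The graph `G_k(a)` on the vertex set `F ∪ {∞}`.  (When `tr(1) = 0`, the
relation `adjRel` is symmetric on distinct vertices, so `fromRel` produces
exactly the graph whose adjacency is given by `adjRel`.) -/
def Gka {F : Type*} [Field F] (k : ℕ) (a : F) : SimpleGraph (Option F) :=
  SimpleGraph.fromRel (adjRel k a)

section Aux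

variable {F : Type*} [Field F] [CharP F 2]

lemma fieldTr_add (k : ℕ) (x y : F) : fieldTr k (x + y) = fieldTr k x + fieldTr k y := by
  unfold fieldTr
  rw [← Finset.sum_add_distrib]
  exact Finset.sum_congr rfl fun i _ => add_pow_char_pow x y 2 i

variable [Fintype F]

lemma fieldTr_sq (k : ℕ) (hcard : Fintype.card F = 2 ^ k) (x : F) :
    fieldTr k (x ^ 2) = fieldTr k x := by
  have hx : x ^ 2 ^ k = x := by rw [← hcard]; exact FiniteField.pow_card x
  unfold fieldTr
  have h1 : ∀ i, (x ^ 2) ^ 2 ^ i = x ^ 2 ^ (i + 1) := by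
    intro i; rw [← pow_mul, mul_comm 2 (2 ^ i), pow_succ]
  have h2 := Finset.sum_range_succ (fun i => x ^ 2 ^ i) k
  have h3 := Finset.sum_range_succ' (fun i => x ^ 2 ^ i) k
  rw [h2, hx, pow_zero, pow_one] at h3
  calc ∑ i ∈ Finset.range k, (x ^ 2) ^ 2 ^ i
      = ∑ i ∈ Finset.range k, x ^ 2 ^ (i + 1) := by simp_rw [h1]
    _ = ∑ i ∈ Finset.range k, x ^ 2 ^ i := by
        exact (add_right_cancel h3).symm

lemma fieldTr_one (k : ℕ) (hk : Even k) : fieldTr k (1 : F) = 0 := by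
  have h2 : (2 : F) = 0 := by exact_mod_cast CharP.cast_eq_zero F 2
  unfold fieldTr
  simp only [one_pow, Finset.sum_const, Finset.card_range, nsmul_eq_mul, mul_one]
  obtain ⟨m, rfl⟩ := hk
  have : ((m + m : ℕ) : F) = 2 * (m : F) := by push_cast; ring
  rw [this, h2, zero_mul]

lemma fieldTr_eq_zero_or_one (k : ℕ) (hcard : Fintype.card F = 2 ^ k) (x : F) :
    fieldTr k x = 0 ∨ fieldTr k x = 1 := by
  have hsq : fieldTr k x ^ 2 = fieldTr k (x ^ 2) := by
    unfold fieldTr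
    rw [CharTwo.sum_sq]
    exact Finset.sum_congr rfl fun i _ => by rw [← pow_mul, mul_comm (2 ^ i) 2, pow_mul]
  have h : fieldTr k x ^ 2 = fieldTr k x := hsq.trans (fieldTr_sq k hcard x)
  have hz : fieldTr k x * (fieldTr k x - 1) = 0 := by linear_combination h
  rcases mul_eq_zero.mp hz with h0 | h1
  · exact Or.inl h0
  · exact Or.inr (by linear_combination h1)

lemma exists_sq_add (k : ℕ) (hcard : Fintype.card F = 2 ^ k) (a : F) (ha : fieldTr k a = 1)
    (u : F) (hu : fieldTr k u = 0) : ∃ t : F, t ^ 2 + t = u := by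
  classical
  have h2 : (2 : F) = 0 := by exact_mod_cast CharP.cast_eq_zero F 2
  set P : F →+ F := AddMonoidHom.mk' (fun t => t ^ 2 + t) (by
    intro x y
    rw [CharTwo.add_sq]
    ring) with hP
  set T : F →+ F := AddMonoidHom.mk' (fieldTr k) (fieldTr_add k) with hT
  have hPT : (P.range : Set F) ⊆ (T.ker : Set F) := by
    rintro _ ⟨t, rfl⟩
    simp only [SetLike.mem_coe, AddMonoidHom.mem_ker]
    show fieldTr k (t ^ 2 + t) = 0
    rw [fieldTr_add, fieldTr_sq k hcard, CharTwo.add_self_eq_zero]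
  have hkerP : (P.ker : Set F) = {0, 1} := by
    ext t
    simp only [SetLike.mem_coe, AddMonoidHom.mem_ker, Set.mem_insert_iff,
      Set.mem_singleton_iff]
    show t ^ 2 + t = 0 ↔ _
    constructor
    · intro h
      have hm : t * (t + 1) = 0 := by linear_combination h
      rcases mul_eq_zero.mp hm with h' | h'
      · exact Or.inl h'
      · exact Or.inr (by linear_combination h' - h2)
    · rintro (rfl | rfl)
      · simp
      · show (1 : F) ^ 2 + 1 = 0
        linear_combination h2
  have hrT : (T.range : Set F) = {0, 1} := by
    ext x
    simp only [SetLike.mem_coe, AddMonoidHom.mem_range, Set.mem_insert_iff,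
      Set.mem_singleton_iff]
    constructor
    · rintro ⟨y, rfl⟩
      exact fieldTr_eq_zero_or_one k hcard y
    · rintro (rfl | rfl)
      · exact ⟨0, map_zero T⟩
      · exact ⟨a, ha⟩
  have hne01 : (0 : F) ≠ 1 := zero_ne_one
  have hkPcard : Nat.card P.ker = 2 := by
    have : Nat.card (P.ker : Set F) = 2 := by
      rw [Nat.card_coe_set_eq, hkerP, Set.ncard_pair hne01]
    exact this
  have hrTcard : Nat.card T.range = 2 := by
    have : Nat.card (T.range : Set F) = 2 := by
      rw [Nat.card_coe_set_eq, hrT, Set.ncard_pair hne01]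
    exact this
  have e1 : Nat.card F = Nat.card (F ⧸ P.ker) * Nat.card P.ker :=
    AddSubgroup.card_eq_card_quotient_mul_card_addSubgroup _
  have e2 : Nat.card F = Nat.card (F ⧸ T.ker) * Nat.card T.ker :=
    AddSubgroup.card_eq_card_quotient_mul_card_addSubgroup _
  have q1 : Nat.card (F ⧸ P.ker) = Nat.card P.range :=
    Nat.card_congr (QuotientAddGroup.quotientKerEquivRange P).toEquiv
  have q2 : Nat.card (F ⧸ T.ker) = Nat.card T.range :=
    Nat.card_congr (QuotientAddGroup.quotientKerEquivRange T).toEquiv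
  have hF0 : Nat.card F ≠ 0 := Nat.card_ne_zero.mpr ⟨⟨0⟩, inferInstance⟩
  have hcards : Nat.card T.ker ≤ Nat.card P.range := by
    rw [q1, hkPcard] at e1
    rw [q2, hrTcard] at e2
    omega
  have heq : (P.range : Set F) = (T.ker : Set F) := by
    apply Set.eq_of_subset_of_ncard_le hPT
    rw [← Nat.card_coe_set_eq, ← Nat.card_coe_set_eq]
    exact hcards
  have hu' : u ∈ (T.ker : Set F) := by
    simp only [SetLike.mem_coe, AddMonoidHom.mem_ker]
    exact hu
  rw [← heq] at hu'
  obtain ⟨t, ht⟩ := hu'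
  exact ⟨t, ht⟩

lemma gka_iso_translate (k : ℕ) (hcard : Fintype.card F = 2 ^ k) (a a' t : F)
    (ht0 : fieldTr k t = 0) (ht : t ^ 2 + t = a + a') :
    Nonempty (Gka k a ≃g Gka k a') := by
  have h2 : (2 : F) = 0 := by exact_mod_cast CharP.cast_eq_zero F 2
  have ha' : a' = t ^ 2 + t + a := by linear_combination -ht - a * h2
  have key : ∀ x y : F, x ≠ y →
      (adjRel k a' (some (x + t)) (some (y + t)) ↔ adjRel k a (some x) (some y)) := by
    intro x y hxy
    show fieldTr k (((x + t) * (y + t) + (x + t) + a') / ((x + t) + (y + t))) = 0 ↔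
      fieldTr k ((x * y + x + a) / (x + y)) = 0
    have hxy0 : x + y ≠ 0 := by
      intro h
      exact hxy (by linear_combination h - y * h2)
    have hnum : (x + t) * (y + t) + (x + t) + a' = (x * y + x + a) + t * (x + y) := by
      rw [ha']; linear_combination (t ^ 2 + t) * h2
    have hden : (x + t) + (y + t) = x + y := by linear_combination t * h2
    rw [hden, hnum, add_div, mul_div_assoc, div_self hxy0, mul_one, fieldTr_add, ht0,
      add_zero]
  have hinf : ∀ x : F, fieldTr k (x + t) = fieldTr k x := by
    intro x; rw [fieldTr_add, ht0, add_zero]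
  refine ⟨⟨Equiv.optionCongr (Equiv.addRight t), @fun x y => ?_⟩⟩
  cases x <;> cases y <;>
    simp only [Gka, SimpleGraph.fromRel_adj, Equiv.optionCongr_apply, Option.map_some,
      Option.map_none, Equiv.coe_addRight]
  · simp [adjRel]
  · simp [adjRel, hinf]
  · simp [adjRel, hinf]
  · rename_i x y
    by_cases hxy : x = y
    · subst hxy; simp
    · have k1 := key x y hxy
      have k2 := key y x (Ne.symm hxy)
      have hne : x + t ≠ y + t := by
        intro h; exact hxy (by linear_combination h)
      simp only [ne_eq, Option.some_inj]
      constructor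
      · rintro ⟨-, h | h⟩
        · exact ⟨hxy, Or.inl (k1.mp h)⟩
        · exact ⟨hxy, Or.inr (k2.mp h)⟩
      · rintro ⟨-, h | h⟩
        · exact ⟨hne, Or.inl (k1.mpr h)⟩
        · exact ⟨hne, Or.inr (k2.mpr h)⟩

lemma gka_iso_frobenius (k : ℕ) (hcard : Fintype.card F = 2 ^ k) (a : F) :
    Nonempty (Gka k a ≃g Gka k (a ^ 2)) := by
  have h2 : (2 : F) = 0 := by exact_mod_cast CharP.cast_eq_zero F 2
  have hinj : Function.Injective (fun x : F => x ^ 2) := by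
    intro x y hxy
    have hs : (x + y) ^ 2 = 0 := by
      rw [CharTwo.add_sq]
      linear_combination hxy + y ^ 2 * h2
    have hxy0 : x + y = 0 := pow_eq_zero_iff (n := 2) (by norm_num) |>.mp hs
    linear_combination hxy0 - y * h2
  let e : F ≃ F := Equiv.ofBijective _ (Finite.injective_iff_bijective.mp hinj)
  have he : ∀ x : F, e x = x ^ 2 := fun x => rfl
  have key : ∀ x y : F,
      (adjRel k (a ^ 2) (some (x ^ 2)) (some (y ^ 2)) ↔ adjRel k a (some x) (some y)) := by
    intro x y
    show fieldTr k ((x ^ 2 * y ^ 2 + x ^ 2 + a ^ 2) / (x ^ 2 + y ^ 2)) = 0 ↔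
      fieldTr k ((x * y + x + a) / (x + y)) = 0
    have harg : (x ^ 2 * y ^ 2 + x ^ 2 + a ^ 2) / (x ^ 2 + y ^ 2) =
        ((x * y + x + a) / (x + y)) ^ 2 := by
      rw [div_pow]
      congr 1
      · linear_combination (-(x ^ 2 * y) - x * y * a - x * a) * h2
      · linear_combination (-(x * y)) * h2
    rw [harg, fieldTr_sq k hcard]
  have hinf : ∀ x : F, fieldTr k (x ^ 2) = fieldTr k x := fieldTr_sq k hcard
  refine ⟨⟨Equiv.optionCongr e, @fun x y => ?_⟩⟩
  cases x <;> cases y <;>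
    simp only [Gka, SimpleGraph.fromRel_adj, Equiv.optionCongr_apply, Option.map_some,
      Option.map_none, he]
  · simp [adjRel]
  · simp [adjRel, hinf]
  · simp [adjRel, hinf]
  · rename_i x y
    by_cases hxy : x = y
    · subst hxy; simp
    · have k1 := key x y
      have k2 := key y x
      have hne : x ^ 2 ≠ y ^ 2 := fun h => hxy (hinj h)
      simp only [ne_eq, Option.some_inj]
      constructor
      · rintro ⟨-, h | h⟩
        · exact ⟨hxy, Or.inl (k1.mp h)⟩
        · exact ⟨hxy, Or.inr (k2.mp h)⟩
      · rintro ⟨-, h | h⟩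
        · exact ⟨hne, Or.inl (k1.mpr h)⟩
        · exact ⟨hne, Or.inr (k2.mpr h)⟩

end Aux

theorem Gka_iso_of_trace_one
    {F : Type*} [Field F] [Fintype F] [CharP F 2] (k : ℕ) (hk : Even k)
    (hcard : Fintype.card F = 2 ^ k) (a a' : F)
    (ha : fieldTr k a = 1) (ha' : fieldTr k a' = 1) :
    Nonempty (Gka k a ≃g Gka k a') := by
  have h2 : (2 : F) = 0 := by exact_mod_cast CharP.cast_eq_zero F 2
  have hone : (1 : F) + 1 = 0 := by linear_combination h2
  have hu : fieldTr k (a + a') = 0 := by rw [fieldTr_add, ha, ha', hone]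
  obtain ⟨t, ht⟩ := exists_sq_add k hcard a ha (a + a') hu
  rcases fieldTr_eq_zero_or_one k hcard t with ht0 | ht1
  · exact gka_iso_translate k hcard a a' t ht0 ht
  · obtain ⟨h1⟩ := gka_iso_frobenius k hcard a
    have ht0' : fieldTr k (a + t) = 0 := by rw [fieldTr_add, ha, ht1, hone]
    have ht' : (a + t) ^ 2 + (a + t) = a ^ 2 + a' := by
      rw [CharTwo.add_sq]
      linear_combination ht + a * h2
    obtain ⟨h2'⟩ := gka_iso_translate k hcard (a ^ 2) a' (a + t) ht0' ht'
    exact ⟨h1.trans h2'⟩
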